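/- If x ∈ Γ_k^n and x_i ≥ x_j, then s_{k-1}(x|i) ≤ s_{k-1}(x|j). -/
import Mathlib


open Finset

/-- The `k`-th elementary symmetric polynomial of `x ∈ ℝⁿ`. -/
noncomputable def esymm (n k : ℕ) (x : Fin n → ℝ) : ℝ :=
  ∑ A ∈ Finset.powersetCard k (Finset.univ : Finset (Fin n)), ∏ i ∈ A, x i

/-- The Gårding cone `Γₖⁿ = {x : sₗ(x) > 0, l = 1,…,k}`. -/
def GammaK (n k : ℕ) (x : Fin n → ℝ) : Prop :=
  ∀ l, 1 ≤ l → l ≤ k → 0 < esymm n l x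

namespace EsymmAux

open Polynomial

/-! ### Basic facts about `Multiset.esymm` over ℝ -/

lemma esymm_zero' (s : Multiset ℝ) : s.esymm 0 = 1 := by
  simp [Multiset.esymm, Multiset.powersetCard_zero_left]

lemma esymm_cons (a : ℝ) (s : Multiset ℝ) (k : ℕ) :
    (a ::ₘ s).esymm (k + 1) = s.esymm (k + 1) + a * s.esymm k := by
  rw [Multiset.esymm, Multiset.powersetCard_cons, Multiset.map_add, Multiset.sum_add,
    Multiset.map_map]
  congr 1
  rw [Multiset.esymm, ← Multiset.sum_map_mul_left]
  congr 1
  apply Multiset.map_congr rfl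
  intro t _
  simp [Multiset.prod_cons]

lemma esymm_of_card_lt {s : Multiset ℝ} {k : ℕ} (h : Multiset.card s < k) :
    s.esymm k = 0 := by
  rw [Multiset.esymm, Multiset.powersetCard_eq_empty _ h]
  simp

lemma esymm_card (s : Multiset ℝ) : s.esymm (Multiset.card s) = s.prod := by
  induction s using Multiset.induction_on with
  | empty => simp [esymm_zero']
  | cons a s ih =>
      rw [Multiset.card_cons, esymm_cons, esymm_of_card_lt (by simp), ih]
      simp

lemma esymm_pos {s : Multiset ℝ} (h : ∀ b ∈ s, 0 < b) :
    ∀ k, k ≤ Multiset.card s → 0 < s.esymm k := by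
  induction s using Multiset.induction_on with
  | empty =>
      intro k hk
      have hk0 : k = 0 := by simpa using hk
      subst hk0
      simp [esymm_zero']
  | cons a s ih =>
      intro k hk
      have ha : 0 < a := h a (Multiset.mem_cons_self _ _)
      have hs : ∀ b ∈ s, 0 < b := fun b hb => h b (Multiset.mem_cons_of_mem hb)
      match k with
      | 0 => simp [esymm_zero']
      | k + 1 =>
          rw [esymm_cons]
          rcases Nat.lt_or_ge (Multiset.card s) (k + 1) with hlt | hge
          · have h1 : s.esymm (k + 1) = 0 := esymm_of_card_lt hlt
            have h2 : 0 < s.esymm k := ih hs k (by simp at hk; omega)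
            nlinarith
          · have h1 : 0 < s.esymm (k + 1) := ih hs _ hge
            have h2 : 0 < s.esymm k := ih hs k (by omega)
            nlinarith

lemma two_esymm_two_le (s : Multiset ℝ) : 2 * s.esymm 2 ≤ (s.esymm 1) ^ 2 := by
  induction s using Multiset.induction_on with
  | empty =>
      rw [esymm_of_card_lt (by simp), esymm_of_card_lt (by simp)]
      norm_num
  | cons a s ih =>
      have h1 : (a ::ₘ s).esymm 1 = s.esymm 1 + a * s.esymm 0 := esymm_cons a s 0
      have h2 : (a ::ₘ s).esymm 2 = s.esymm 2 + a * s.esymm 1 := esymm_cons a s 1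
      rw [h1, h2, esymm_zero']
      nlinarith [sq_nonneg a, sq_nonneg (s.esymm 1)]

/-- "Reversal": esymm of the inverses times the product gives esymm from the top. -/
lemma esymm_rev (s : Multiset ℝ) (h0 : ∀ b ∈ s, b ≠ 0) :
    ∀ j, j ≤ Multiset.card s →
      (s.map (·⁻¹)).esymm j * s.prod = s.esymm (Multiset.card s - j) := by
  induction s using Multiset.induction_on with
  | empty =>
      intro j hj
      have hj0 : j = 0 := by simpa using hj
      subst hj0
      simp [esymm_zero']
  | cons a s ih =>
      intro j hj
      have ha : a ≠ 0 := h0 a (Multiset.mem_cons_self _ _)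
      have hs : ∀ b ∈ s, b ≠ 0 := fun b hb => h0 b (Multiset.mem_cons_of_mem hb)
      match j with
      | 0 =>
          rw [esymm_zero', Nat.sub_zero, esymm_card]
          ring
      | j + 1 =>
          rw [Multiset.map_cons, esymm_cons, Multiset.prod_cons]
          have hj' : j + 1 ≤ Multiset.card s + 1 := by simpa using hj
          rcases Nat.lt_or_ge (Multiset.card s) (j + 1) with hlt | hge
          · -- j + 1 = card s + 1
            have hjc : j = Multiset.card s := by omega
            subst hjc
            have hz : (s.map (·⁻¹)).esymm (Multiset.card s + 1) = 0 :=
              esymm_of_card_lt (by simp)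
            have hIH : (s.map (·⁻¹)).esymm (Multiset.card s) * s.prod = 1 := by
              have := ih hs (Multiset.card s) le_rfl
              rwa [Nat.sub_self, esymm_zero'] at this
            have hcard0 : Multiset.card (a ::ₘ s) - (Multiset.card s + 1) = 0 := by
              simp
            rw [hz, hcard0, esymm_zero', zero_add]
            have expand : a⁻¹ * (s.map (·⁻¹)).esymm (Multiset.card s) * (a * s.prod)
                = (a⁻¹ * a) * ((s.map (·⁻¹)).esymm (Multiset.card s) * s.prod) := by ring
            rw [expand, hIH, inv_mul_cancel₀ ha, one_mul]
          · have hIH1 : (s.map (·⁻¹)).esymm (j + 1) * s.prod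
                = s.esymm (Multiset.card s - (j + 1)) := ih hs (j + 1) hge
            have hIH2 : (s.map (·⁻¹)).esymm j * s.prod = s.esymm (Multiset.card s - j) :=
              ih hs j (by omega)
            have hcard : Multiset.card (a ::ₘ s) - (j + 1) = (Multiset.card s - (j + 1)) + 1 := by
              simp only [Multiset.card_cons]; omega
            rw [hcard, esymm_cons]
            have harith : Multiset.card s - (j + 1) + 1 = Multiset.card s - j := by omega
            rw [harith]
            have expand : ((s.map (·⁻¹)).esymm (j + 1) + a⁻¹ * (s.map (·⁻¹)).esymm j) *
                (a * s.prod) = a * ((s.map (·⁻¹)).esymm (j + 1) * s.prod)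
                + (a⁻¹ * a) * ((s.map (·⁻¹)).esymm j * s.prod) := by ring
            rw [expand, hIH1, hIH2, inv_mul_cancel₀ ha]
            ring

/-! ### The product polynomial -/

/-- The polynomial `∏ (X + a)` over a multiset. -/
noncomputable def pp (s : Multiset ℝ) : ℝ[X] := (s.map fun a => X + C a).prod

lemma pp_monic (s : Multiset ℝ) : (pp s).Monic :=
  monic_multiset_prod_of_monic s _ (fun a _ => monic_X_add_C a)

lemma pp_natDegree (s : Multiset ℝ) : (pp s).natDegree = Multiset.card s := by
  rw [pp, natDegree_multiset_prod_of_monic]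
  · rw [Multiset.map_map]
    have : (s.map fun a => ((X + C a : ℝ[X]).natDegree)) = s.map fun _ => 1 := by
      apply Multiset.map_congr rfl
      intro a _
      simp [natDegree_X_add_C]
    rw [Function.comp_def, this, Multiset.map_const', Multiset.sum_replicate, smul_eq_mul,
      mul_one]
  · intro p hp
    obtain ⟨a, _, rfl⟩ := Multiset.mem_map.1 hp
    exact monic_X_add_C a

lemma pp_coeff (s : Multiset ℝ) {m : ℕ} (hm : m ≤ Multiset.card s) :
    (pp s).coeff m = s.esymm (Multiset.card s - m) :=
  Multiset.prod_X_add_C_coeff s hm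

lemma pp_roots (s : Multiset ℝ) : (pp s).roots = s.map (fun a => -a) := by
  have : pp s = ((s.map fun a => -a).map fun a => X - C a).prod := by
    rw [pp, Multiset.map_map]
    apply congr_arg
    apply Multiset.map_congr rfl
    intro a _
    simp [sub_neg_eq_add]
  rw [this, roots_multiset_prod_X_sub_C]

/-! ### Newton-type lemma -/

lemma newton (s : Multiset ℝ) (l : ℕ) (h1 : 0 < s.esymm l) (h2 : s.esymm (l + 1) = 0) :
    s.esymm (l + 2) ≤ 0 := by
  by_contra hpos
  push_neg at hpos
  set n := Multiset.card s with hn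
  have hln : l + 2 ≤ n := by
    by_contra hc
    push_neg at hc
    rw [esymm_of_card_lt (by omega)] at hpos
    exact lt_irrefl 0 hpos
  set m := n - (l + 2) with hm
  set q : ℝ[X] := derivative^[m] (pp s) with hq
  -- coefficients of q
  have hcoeff : ∀ j, j ≤ l + 2 →
      q.coeff j = ((j + m).descFactorial m : ℝ) * s.esymm (l + 2 - j) := by
    intro j hj
    rw [hq, Polynomial.coeff_iterate_derivative, pp_coeff s (by omega), nsmul_eq_mul]
    congr 2
    omega
  have hdf : ∀ j : ℕ, (0:ℝ) < ((j + m).descFactorial m : ℝ) := by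
    intro j
    have : 0 < (j + m).descFactorial m :=
      Nat.pos_of_ne_zero (by rw [Ne, Nat.descFactorial_eq_zero_iff_lt]; omega)
    exact_mod_cast this
  have hc2 : 0 < q.coeff 2 := by
    rw [hcoeff 2 (by omega)]
    have : l + 2 - 2 = l := by omega
    rw [this]
    exact mul_pos (hdf 2) h1
  have hc1 : q.coeff 1 = 0 := by
    rw [hcoeff 1 (by omega)]
    have : l + 2 - 1 = l + 1 := by omega
    rw [this, h2, mul_zero]
  have hc0 : 0 < q.coeff 0 := by
    rw [hcoeff 0 (by omega)]
    simpa using mul_pos (hdf 0) hpos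
  have hqne : q ≠ 0 := fun h => by simp [h] at hc2
  -- degree of q
  have hdeg_le : q.natDegree ≤ l + 2 := by
    have h := Polynomial.natDegree_iterate_derivative (pp s) m
    rw [pp_natDegree, ← hq] at h
    omega
  -- roots of q
  have hroots_ge : ∀ i : ℕ, n - i ≤ Multiset.card ((derivative^[i]) (pp s)).roots := by
    intro i
    induction i with
    | zero =>
        simp [pp_roots, hn]
    | succ i ih =>
        have := Polynomial.card_roots_le_derivative (derivative^[i] (pp s))
        rw [Function.iterate_succ_apply']
        omega
  have hroots_le : Multiset.card q.roots ≤ q.natDegree := by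
    simpa using (Polynomial.card_roots' q)
  have hroots_card : Multiset.card q.roots = q.natDegree ∧ q.natDegree = l + 2 := by
    have h := hroots_ge m
    rw [← hq] at h
    constructor <;> omega
  -- Vieta for q
  set U : Multiset ℝ := q.roots.map Neg.neg with hU
  have hUcard : Multiset.card U = l + 2 := by
    rw [hU, Multiset.card_map, hroots_card.1, hroots_card.2]
  have hvieta : ∀ j, j ≤ l + 2 → q.coeff j = q.leadingCoeff * U.esymm (l + 2 - j) := by
    intro j hj
    rw [Polynomial.coeff_eq_esymm_roots_of_card hroots_card.1
      (by rw [hroots_card.2]; exact hj)]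
    rw [hroots_card.2, hU, Multiset.esymm_neg]
    ring
  -- leading coefficient is positive
  have hlc : 0 < q.leadingCoeff := by
    have hco := hcoeff (l + 2) le_rfl
    rw [Polynomial.leadingCoeff, hroots_card.2, hco]
    simpa using mul_pos (hdf (l + 2)) (by rw [esymm_zero']; norm_num : (0:ℝ) < s.esymm 0)
  -- translate coefficient facts to U
  have hU0 : 0 < U.esymm (l + 2) := by
    have hv := hvieta 0 (by omega)
    rw [Nat.sub_zero] at hv
    rw [hv] at hc0
    by_contra hcon
    push_neg at hcon
    nlinarith
  have hU1 : U.esymm (l + 1) = 0 := by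
    have hv := hvieta 1 (by omega)
    have h' : l + 2 - 1 = l + 1 := by omega
    rw [h', hc1] at hv
    rcases mul_eq_zero.1 hv.symm with h | h
    · exact absurd h (ne_of_gt hlc)
    · exact h
  have hUl : 0 < U.esymm l := by
    have hv := hvieta 2 (by omega)
    have h' : l + 2 - 2 = l := by omega
    rw [h'] at hv
    rw [hv] at hc2
    by_contra hcon
    push_neg at hcon
    nlinarith
  -- U has nonzero entries and positive product
  have hUprod : 0 < U.prod := by
    rw [← hUcard] at hU0
    rwa [esymm_card] at hU0
  have hUne : ∀ b ∈ U, b ≠ 0 := by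
    intro b hb hb0
    rw [hb0] at hb
    have := Multiset.prod_eq_zero hb
    rw [this] at hUprod
    exact lt_irrefl 0 hUprod
  -- reversal
  have hrev1 := esymm_rev U hUne 1 (by omega)
  have hrev2 := esymm_rev U hUne 2 (by omega)
  rw [hUcard] at hrev1 hrev2
  have h1' : l + 2 - 1 = l + 1 := by omega
  have h2' : l + 2 - 2 = l := by omega
  rw [h1', hU1] at hrev1
  rw [h2'] at hrev2
  have hV1 : (U.map (·⁻¹)).esymm 1 = 0 := by
    rcases mul_eq_zero.1 hrev1 with h | h
    · exact h
    · exact absurd h (ne_of_gt hUprod)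
  have hV2 : (U.map (·⁻¹)).esymm 2 ≤ 0 := by
    have := two_esymm_two_le (U.map (·⁻¹))
    rw [hV1] at this
    nlinarith
  nlinarith [hrev2, hUl, hUprod, hV2]

/-! ### Shift lemma -/

lemma eval_ge_coeff_zero (p : ℝ[X]) {t : ℝ} (ht : 0 ≤ t) (h : ∀ j, 0 ≤ p.coeff j) :
    p.coeff 0 ≤ p.eval t := by
  rw [Polynomial.eval_eq_sum_range]
  have h0 : (0 : ℕ) ∈ Finset.range (p.natDegree + 1) := by simp
  have : p.coeff 0 = p.coeff 0 * t ^ 0 := by simp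
  rw [this]
  apply Finset.single_le_sum (f := fun i => p.coeff i * t ^ i) _ h0
  intro i _
  exact mul_nonneg (h i) (pow_nonneg ht i)

lemma shift (s : Multiset ℝ) {t : ℝ} (ht : 0 ≤ t) (k : ℕ)
    (h : ∀ l, 1 ≤ l → l ≤ k → 0 < s.esymm l) :
    ∀ l, 1 ≤ l → l ≤ k → 0 < (s.map (· + t)).esymm l := by
  intro l hl1 hlk
  set n := Multiset.card s with hn
  have hln : l ≤ n := by
    by_contra hc
    push_neg at hc
    have := h l hl1 hlk
    rw [esymm_of_card_lt hc] at this
    exact lt_irrefl 0 this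
  -- the shifted product polynomial is the Taylor shift
  have hshift : pp (s.map (· + t)) = Polynomial.taylor t (pp s) := by
    rw [Polynomial.taylor_apply, pp, pp, Polynomial.multiset_prod_comp, Multiset.map_map,
      Multiset.map_map]
    apply congr_arg
    apply Multiset.map_congr rfl
    intro a _
    simp only [Function.comp_apply, Polynomial.add_comp, Polynomial.X_comp, Polynomial.C_comp]
    rw [add_assoc, add_comm (C t) (C a), ← C_add]
  have hcard' : Multiset.card (s.map (· + t)) = n := by simp [hn]
  have key : (s.map (· + t)).esymm l
      = (Polynomial.hasseDeriv (n - l) (pp s)).eval t := by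
    have h1 : (s.map (· + t)).esymm l = (pp (s.map (· + t))).coeff (n - l) := by
      rw [pp_coeff (s.map (· + t)) (by omega)]
      rw [hcard']
      congr 1
      omega
    rw [h1, hshift, Polynomial.taylor_coeff]
  rw [key]
  set D := Polynomial.hasseDeriv (n - l) (pp s) with hD
  have hcoeffD : ∀ j, D.coeff j = ((j + (n - l)).choose (n - l) : ℝ) * (pp s).coeff (j + (n - l)) := by
    intro j
    rw [hD, Polynomial.hasseDeriv_coeff]
  have hnonneg : ∀ j, 0 ≤ D.coeff j := by
    intro j
    rw [hcoeffD j]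
    rcases Nat.lt_or_ge n (j + (n - l)) with hlt | hge
    · rw [Polynomial.coeff_eq_zero_of_natDegree_lt (by rw [pp_natDegree]; omega)]
      simp
    · rw [pp_coeff s (by omega)]
      apply mul_nonneg (by positivity)
      rcases Nat.eq_zero_or_pos (n - (j + (n - l))) with h0 | hpos
      · rw [h0, esymm_zero']; norm_num
      · exact le_of_lt (h _ hpos (by omega))
  have hc0 : 0 < D.coeff 0 := by
    rw [hcoeffD 0]
    have : (pp s).coeff (0 + (n - l)) = s.esymm l := by
      rw [pp_coeff s (by omega)]
      congr 1
      omega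
    rw [this]
    have hch : ((0 + (n - l)).choose (n - l) : ℝ) = 1 := by
      norm_num
    rw [hch, one_mul]
    exact h l hl1 hlk
  calc (0:ℝ) < D.coeff 0 := hc0
    _ ≤ D.eval t := eval_ge_coeff_zero D ht hnonneg

/-! ### Continuity -/

lemma cont_esymm (s : Multiset ℝ) (m : ℕ) :
    Continuous fun t : ℝ => (s.map (· + t)).esymm m := by
  induction s using Multiset.induction_on generalizing m with
  | empty =>
      match m with
      | 0 => simpa [esymm_zero'] using continuous_const
      | m + 1 =>
          have : ∀ t : ℝ, ((0 : Multiset ℝ).map (· + t)).esymm (m + 1) = 0 := by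
            intro t
            exact esymm_of_card_lt (by simp)
          simpa [this] using continuous_const
  | cons a s ih =>
      match m with
      | 0 => simpa [esymm_zero'] using continuous_const
      | m + 1 =>
          have heq : ∀ t : ℝ, ((a ::ₘ s).map (· + t)).esymm (m + 1)
              = (s.map (· + t)).esymm (m + 1) + (a + t) * (s.map (· + t)).esymm m := by
            intro t
            rw [Multiset.map_cons, esymm_cons]
          simp only [heq]
          exact (ih (m + 1)).add (((continuous_const).add continuous_id).mul (ih m))

lemma single_le_sum_ms {s : Multiset ℝ} (h : ∀ b ∈ s, 0 ≤ b) {a : ℝ} (ha : a ∈ s) :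
    a ≤ s.sum := by
  rw [← Multiset.cons_erase ha, Multiset.sum_cons]
  have h2 : 0 ≤ (s.erase a).sum := by
    apply Multiset.sum_nonneg
    intro b hb
    exact h b (Multiset.mem_of_mem_erase hb)
  linarith

/-! ### The key positivity fact -/

lemma keyF (k : ℕ) (hk : 1 ≤ k) :
    ∀ (a : ℝ) (s : Multiset ℝ),
      (∀ l, 1 ≤ l → l ≤ k → 0 < ((a ::ₘ s).esymm l)) → 0 < s.esymm (k - 1) := by
  induction k using Nat.strong_induction_on with
  | _ k IH =>
  intro a s h
  rcases Nat.lt_or_ge k 2 with hk2 | hk2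
  · interval_cases k
    simpa [esymm_zero'] using (by norm_num : (0:ℝ) < 1)
  · by_contra hneg
    push_neg at hneg
    have hcard : k ≤ Multiset.card s + 1 := by
      by_contra hc
      push_neg at hc
      have := h k hk le_rfl
      rw [esymm_of_card_lt (by simp; omega)] at this
      exact lt_irrefl 0 this
    -- a large shift making everything positive
    set T : ℝ := 1 + (s.map (fun b => |b|)).sum with hT
    have habs_mem : ∀ z ∈ s.map (fun b => |b|), (0:ℝ) ≤ z := by
      intro z hz
      obtain ⟨b, _, rfl⟩ := Multiset.mem_map.1 hz
      exact abs_nonneg b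
    have habs_nonneg : 0 ≤ (s.map (fun b => |b|)).sum := Multiset.sum_nonneg habs_mem
    have hT0 : 0 ≤ T := by rw [hT]; linarith
    have hposT : ∀ b ∈ s, 0 < b + T := by
      intro b hb
      have h1 : |b| ≤ (s.map (fun b => |b|)).sum :=
        single_le_sum_ms habs_mem (Multiset.mem_map_of_mem _ hb)
      have h2 : -b ≤ |b| := neg_le_abs b
      rw [hT]; linarith
    set g : ℝ → ℝ := fun t => (s.map (· + t)).esymm (k - 1) with hg
    have hg0 : g 0 ≤ 0 := by
      have : s.map (· + (0:ℝ)) = s := by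
        rw [show ((· + (0:ℝ)) : ℝ → ℝ) = id by funext b; simp, Multiset.map_id]
      rw [hg]
      simpa [this] using hneg
    have hgT : 0 < g T := by
      apply esymm_pos
      · intro b hb
        obtain ⟨c, hc, rfl⟩ := Multiset.mem_map.1 hb
        exact hposT c hc
      · simp
        omega
    have hcont : Continuous g := cont_esymm s (k - 1)
    have hsub : Set.Icc (g 0) (g T) ⊆ g '' Set.Icc 0 T :=
      intermediate_value_Icc hT0 hcont.continuousOn
    obtain ⟨r, hrmem, hr⟩ := hsub ⟨hg0, le_of_lt hgT⟩
    set s' := s.map (· + r) with hs'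
    have hr0 : 0 ≤ r := hrmem.1
    have hG' : ∀ l, 1 ≤ l → l ≤ k → 0 < ((a + r) ::ₘ s').esymm l := by
      intro l h1 h2
      have := shift (a ::ₘ s) hr0 k h l h1 h2
      rwa [Multiset.map_cons] at this
    have h2' : s'.esymm (k - 1) = 0 := hr
    have h1' : 0 < s'.esymm (k - 2) := by
      rcases Nat.lt_or_ge k 3 with hk3 | hk3
      · have : k = 2 := by omega
        subst this
        simpa [esymm_zero'] using (by norm_num : (0:ℝ) < 1)
      · have := IH (k - 1) (by omega) (by omega) (a + r) s'
          (fun l hl1 hl2 => hG' l hl1 (by omega))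
        have harith : k - 1 - 1 = k - 2 := by omega
        rwa [harith] at this
    have hnewton : s'.esymm (k - 2 + 2) ≤ 0 := by
      apply newton s' (k - 2) h1'
      have : k - 2 + 1 = k - 1 := by omega
      rw [this, h2']
    have harith2 : k - 2 + 2 = k := by omega
    rw [harith2] at hnewton
    have hfullk := hG' k hk le_rfl
    have hdecomp : ((a + r) ::ₘ s').esymm k = s'.esymm k + (a + r) * s'.esymm (k - 1) := by
      have := esymm_cons (a + r) s' (k - 1)
      have harith3 : k - 1 + 1 = k := by omega
      rwa [harith3] at this
    rw [hdecomp, h2'] at hfullk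
    linarith

end EsymmAux

section Glue

open EsymmAux

lemma esymm_eq_multiset (n k : ℕ) (x : Fin n → ℝ) :
    esymm n k x = (Finset.univ.val.map x).esymm k := by
  rw [esymm, Finset.esymm_map_val]

lemma map_erase_decomp {n : ℕ} (x : Fin n → ℝ) (s : Finset (Fin n)) {i : Fin n} (hi : i ∈ s) :
    s.val.map x = x i ::ₘ (s.erase i).val.map x := by
  conv_lhs => rw [← Finset.insert_erase hi]
  rw [Finset.insert_val_of_notMem (Finset.notMem_erase i s), Multiset.map_cons]

lemma map_update_eq {n : ℕ} (x : Fin n → ℝ) (i : Fin n) (s : Finset (Fin n)) (hi : i ∉ s) :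
    s.val.map (Function.update x i 0) = s.val.map x := by
  apply Multiset.map_congr rfl
  intro m hm
  have hmi : m ≠ i := by
    intro h
    subst h
    exact hi hm
  exact Function.update_of_ne hmi _ _

end Glue

/-- If x ∈ Γₖⁿ and xᵢ ≥ xⱼ, then s_{k-1}(x|i) ≤ s_{k-1}(x|j). -/
theorem esymm_update_mono (n k : ℕ) (hk : 1 ≤ k) (x : Fin n → ℝ) (hx : GammaK n k x)
    (i j : Fin n) (hij : x j ≤ x i) :
    esymm n (k - 1) (Function.update x i 0) ≤ esymm n (k - 1) (Function.update x j 0) := by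
  classical
  open EsymmAux in
  rcases eq_or_ne i j with rfl | hne
  · exact le_refl _
  rcases Nat.lt_or_ge k 2 with hk2 | hk2
  · interval_cases k
    simp [esymm]
  -- k ≥ 2
  have hji : j ∈ Finset.univ.erase i := Finset.mem_erase.2 ⟨Ne.symm hne, Finset.mem_univ j⟩
  have hij' : i ∈ Finset.univ.erase j := Finset.mem_erase.2 ⟨hne, Finset.mem_univ i⟩
  set B : Multiset ℝ := ((Finset.univ.erase i).erase j).val.map x with hB
  -- multiset of x|i
  have hMi : Finset.univ.val.map (Function.update x i 0) = (0:ℝ) ::ₘ x j ::ₘ B := by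
    rw [map_erase_decomp (Function.update x i 0) Finset.univ (Finset.mem_univ i),
      Function.update_self, map_update_eq x i _ (Finset.notMem_erase i _),
      map_erase_decomp x (Finset.univ.erase i) hji]
  have hMj : Finset.univ.val.map (Function.update x j 0) = (0:ℝ) ::ₘ x i ::ₘ B := by
    rw [map_erase_decomp (Function.update x j 0) Finset.univ (Finset.mem_univ j),
      Function.update_self, map_update_eq x j _ (Finset.notMem_erase j _),
      map_erase_decomp x (Finset.univ.erase j) hij', hB, Finset.erase_right_comm]
  have hMfull : Finset.univ.val.map x = x i ::ₘ x j ::ₘ B := by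
    rw [map_erase_decomp x Finset.univ (Finset.mem_univ i),
      map_erase_decomp x (Finset.univ.erase i) hji]
  -- the two sides
  have hside_i : esymm n (k-1) (Function.update x i 0)
      = B.esymm (k-1) + x j * B.esymm (k-2) := by
    rw [esymm_eq_multiset, hMi]
    have h1 : ((0:ℝ) ::ₘ x j ::ₘ B).esymm (k - 2 + 1)
        = (x j ::ₘ B).esymm (k - 2 + 1) + 0 * (x j ::ₘ B).esymm (k-2) :=
      esymm_cons 0 _ (k - 2)
    have harith : k - 2 + 1 = k - 1 := by omega
    rw [harith] at h1
    rw [h1, zero_mul, add_zero]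
    have h2 := esymm_cons (x j) B (k - 2)
    rwa [harith] at h2
  have hside_j : esymm n (k-1) (Function.update x j 0)
      = B.esymm (k-1) + x i * B.esymm (k-2) := by
    rw [esymm_eq_multiset, hMj]
    have h1 : ((0:ℝ) ::ₘ x i ::ₘ B).esymm (k - 2 + 1)
        = (x i ::ₘ B).esymm (k - 2 + 1) + 0 * (x i ::ₘ B).esymm (k-2) :=
      esymm_cons 0 _ (k - 2)
    have harith : k - 2 + 1 = k - 1 := by omega
    rw [harith] at h1
    rw [h1, zero_mul, add_zero]
    have h2 := esymm_cons (x i) B (k - 2)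
    rwa [harith] at h2
  -- positivity of B.esymm (k-2)
  have hfull : ∀ l, 1 ≤ l → l ≤ k → 0 < (x i ::ₘ x j ::ₘ B).esymm l := by
    intro l h1 h2
    have := hx l h1 h2
    rwa [esymm_eq_multiset, hMfull] at this
  have hBpos : 0 ≤ B.esymm (k - 2) := by
    rcases Nat.lt_or_ge k 3 with hk3 | hk3
    · have : k = 2 := by omega
      subst this
      simp [esymm_zero']
    · have step1 : ∀ l, 1 ≤ l → l ≤ k - 1 → 0 < (x j ::ₘ B).esymm l := by
        intro l hl1 hl2
        have := keyF (l + 1) (by omega) (x i) (x j ::ₘ B)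
          (fun m hm1 hm2 => hfull m hm1 (by omega))
        simpa using this
      have := keyF (k - 1) (by omega) (x j) B step1
      have harith : k - 1 - 1 = k - 2 := by omega
      rw [harith] at this
      exact le_of_lt this
  rw [hside_i, hside_j]
  have := mul_le_mul_of_nonneg_right hij hBpos
  linarith
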